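/- For centered and standardized (X, Y) with correlation ρ and finite fourth moments, Var( XY − (ρ/2)(X² + Y²) ) = (1 + ρ²/2) μ_{(2,x),(2,y)} + ρ²(μ_{4,x} + μ_{4,y})/4 − ρ(μ_{(3,x),(1,y)} + μ_{(1,x),(3,y)}), where μ_{(p,x),(q,y)} = E(X^p Y^q), μ_{4,x} = E X⁴, μ_{4,y} = E Y⁴. -/

import Mathlib

open MeasureTheory Filter

lemma ennreal_half_eq : (1 : ENNReal) / 2 = 1 / 4 + 1 / 4 := by
  simp only [div_eq_mul_inv, one_mul]
  rw [← two_mul, show (4:ENNReal) = 2*2 by norm_num,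
    ENNReal.mul_inv (by norm_num) (by norm_num), ← mul_assoc,
    ENNReal.mul_inv_cancel (by norm_num) (by norm_num), one_mul]

/-- for centered and standardized `(X,Y)` with correlation `ρ` and finite
fourth moments,
`Var(XY − (ρ/2)(X²+Y²)) = (1+ρ²/2)μ₂₂ + ρ²(μ₄ₓ+μ₄ᵧ)/4 − ρ(μ₃₁ + μ₁₃)`,
where `μ_{pq} = E(X^p Y^q)`. -/
theorem centered_H_variance {Ω : Type*} [MeasurableSpace Ω]
    (P : Measure Ω) [IsProbabilityMeasure P] (X Y : Ω → ℝ) (ρ : ℝ)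
    (hXmeas : Measurable X) (hYmeas : Measurable Y)
    (hX4 : MemLp X 4 P) (hY4 : MemLp Y 4 P)
    (hX3Y : Integrable (fun ω => X ω ^ 3 * Y ω) P)
    (hXY3 : Integrable (fun ω => X ω * Y ω ^ 3) P)
    (hXmean : ∫ ω, X ω ∂P = 0) (hYmean : ∫ ω, Y ω ∂P = 0)
    (hXvar : ∫ ω, X ω ^ 2 ∂P = 1) (hYvar : ∫ ω, Y ω ^ 2 ∂P = 1)
    (hρ : ∫ ω, X ω * Y ω ∂P = ρ) :
    ∫ ω, ((X ω * Y ω - (ρ / 2) * (X ω ^ 2 + Y ω ^ 2))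
        - ∫ ω', (X ω' * Y ω' - (ρ / 2) * (X ω' ^ 2 + Y ω' ^ 2)) ∂P) ^ 2 ∂P
      = (1 + ρ ^ 2 / 2) * (∫ ω, X ω ^ 2 * Y ω ^ 2 ∂P)
        + ρ ^ 2 * ((∫ ω, X ω ^ 4 ∂P) + (∫ ω, Y ω ^ 4 ∂P)) / 4
        - ρ * ((∫ ω, X ω ^ 3 * Y ω ∂P) + (∫ ω, X ω * Y ω ^ 3 ∂P)) := by
  have hX2 : MemLp X 2 P := hX4.mono_exponent (by norm_num)
  have hY2 : MemLp Y 2 P := hY4.mono_exponent (by norm_num)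
  have hXY2 : MemLp (fun ω => X ω * Y ω) 2 P := by
    have := MemLp.smul (p := 4) (q := 4) (r := 2) hY4 hX4 (hpqr := ⟨by simpa [one_div] using ennreal_half_eq.symm⟩)
    exact this
  have hXX2 : MemLp (fun ω => X ω * X ω) 2 P := by
    have := MemLp.smul (p := 4) (q := 4) (r := 2) hX4 hX4 (hpqr := ⟨by simpa [one_div] using ennreal_half_eq.symm⟩)
    exact this
  have hYY2 : MemLp (fun ω => Y ω * Y ω) 2 P := by
    have := MemLp.smul (p := 4) (q := 4) (r := 2) hY4 hY4 (hpqr := ⟨by simpa [one_div] using ennreal_half_eq.symm⟩)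
    exact this
  have hIXY : Integrable (fun ω => X ω * Y ω) P := hXY2.integrable (by norm_num)
  have hIX2 : Integrable (fun ω => X ω ^ 2) P := hX2.integrable_sq
  have hIY2 : Integrable (fun ω => Y ω ^ 2) P := hY2.integrable_sq
  have hIX2Y2 : Integrable (fun ω => X ω ^ 2 * Y ω ^ 2) P := by
    have := hXY2.integrable_sq
    simpa [mul_pow] using this
  have hIX4 : Integrable (fun ω => X ω ^ 4) P := by
    have := hXX2.integrable_sq
    have h : ∀ ω, (X ω * X ω) ^ 2 = X ω ^ 4 := fun ω => by ring
    simpa [h] using this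
  have hIY4 : Integrable (fun ω => Y ω ^ 4) P := by
    have := hYY2.integrable_sq
    have h : ∀ ω, (Y ω * Y ω) ^ 2 = Y ω ^ 4 := fun ω => by ring
    simpa [h] using this
  have hIsum : Integrable (fun ω => X ω ^ 2 + Y ω ^ 2) P := hIX2.add hIY2
  have hmean : ∫ ω', (X ω' * Y ω' - (ρ / 2) * (X ω' ^ 2 + Y ω' ^ 2)) ∂P = 0 := by
    rw [integral_sub hIXY (hIsum.const_mul _), integral_const_mul,
      integral_add hIX2 hIY2, hXvar, hYvar, hρ]
    ring
  rw [hmean]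
  have key : ∀ ω, (X ω * Y ω - ρ / 2 * (X ω ^ 2 + Y ω ^ 2) - 0) ^ 2
      = (1 + ρ ^ 2 / 2) * (X ω ^ 2 * Y ω ^ 2) + (ρ ^ 2 / 4) * X ω ^ 4
        + (ρ ^ 2 / 4) * Y ω ^ 4 - ρ * (X ω ^ 3 * Y ω) - ρ * (X ω * Y ω ^ 3) := by
    intro ω; ring
  simp_rw [key]
  have I1 := hIX2Y2.const_mul (1 + ρ ^ 2 / 2)
  have I2 := hIX4.const_mul (ρ ^ 2 / 4)
  have I3 := hIY4.const_mul (ρ ^ 2 / 4)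
  have I4 := hX3Y.const_mul ρ
  have I5 := hXY3.const_mul ρ
  have A1 : Integrable (fun ω => (1 + ρ ^ 2 / 2) * (X ω ^ 2 * Y ω ^ 2)
      + (ρ ^ 2 / 4) * X ω ^ 4) P := I1.add I2
  have A2 : Integrable (fun ω => (1 + ρ ^ 2 / 2) * (X ω ^ 2 * Y ω ^ 2)
      + (ρ ^ 2 / 4) * X ω ^ 4 + (ρ ^ 2 / 4) * Y ω ^ 4) P := A1.add I3
  have A3 : Integrable (fun ω => (1 + ρ ^ 2 / 2) * (X ω ^ 2 * Y ω ^ 2)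
      + (ρ ^ 2 / 4) * X ω ^ 4 + (ρ ^ 2 / 4) * Y ω ^ 4 - ρ * (X ω ^ 3 * Y ω)) P := A2.sub I4
  rw [integral_sub A3 I5, integral_sub A2 I4, integral_add A1 I3, integral_add I1 I2,
    integral_const_mul, integral_const_mul, integral_const_mul, integral_const_mul,
    integral_const_mul]
  ring
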